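/- Suppose the inverse demand function for asset k is exponential, f_{Γ,k}(Γ) = exp(−b_k Γ) with b_k ≥ 0. Then the recursive quantities of the stress-test bound satisfy, for every i = 1,…,n, Λ̃_{ik} = 1 − b_k ((1 − α_kθ_min)/(α_kθ_min)) Σ_{j=1}^{i} s_{jk} Π_{h=j}^{i−1} ( f_{t,k}(τ̃_{h+1,k}) / f_{t,k}(τ̃_{hk}) )^{(1 − α_kθ_min)/(α_kθ_min Λ̃_{hk})}. -/

import Mathlib

open Set

noncomputable section

/-- **Corollary 4.2 (exponential inverse demand: closed form for `Λ̃`).**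
If the inverse demand function of asset `k` is exponential,
`f_{Γ,k}(γ) = exp(-bₖ γ)` with `bₖ ≥ 0`, then the coefficients of the stress-test
recursion satisfy, for every bank `i`,
`Λ̃_{ik} = 1 - bₖ ((1-αₖθmin)/(αₖθmin)) Σ_{j=1}^{i} s_{jk} Π_{h=j}^{i-1}
(f_{t,k}(τ̃_{h+1,k})/f_{t,k}(τ̃_{hk}))^{(1-αₖθmin)/(αₖθmin Λ̃_{hk})}`.
(Bank `i : Fin n` corresponds to bank `i+1` of the paper.) -/
theorem stress_test_Lambda_exponential
    (n m : ℕ) (hn : 0 < n) (hm : 0 < m)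
    (T θmin : ℝ) (hT : 0 ≤ T) (hθmin : 0 < θmin)
    (x ℓ pbar αl : Fin n → ℝ) (s : Fin n → Fin m → ℝ) (α : Fin m → ℝ)
    (hs : ∀ i k, 0 ≤ s i k)
    (hα : ∀ k, 0 < α k) (hαθ : ∀ k, α k * θmin < 1)
    (ft fΓ : Fin m → ℝ → ℝ)
    (hftC : ∀ k, ContDiff ℝ 1 (ft k)) (hftanti : ∀ k, AntitoneOn (ft k) (Ici 0))
    (hftmem : ∀ k, ∀ t ∈ Ici (0 : ℝ), ft k t ∈ Ioc (0 : ℝ) 1) (hft0 : ∀ k, ft k 0 = 1)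
    (hfΓC : ∀ k, ContDiff ℝ 2 (fΓ k)) (hfΓanti : ∀ k, Antitone (fΓ k))
    (hfΓpos : ∀ k γ, 0 < fΓ k γ) (hfΓ0 : ∀ k, fΓ k 0 = 1)
    -- the individual price thresholds `q̄ᵢ`, ordered nonincreasingly
    (qbar : Fin n → ℝ)
    (hqbar : ∀ i, qbar i =
      (pbar i - x i - (1 - αl i * θmin) * ℓ i) / (∑ k, (1 - α k * θmin) * s i k))
    (horder : ∀ i j : Fin n, i ≤ j → qbar j ≤ qbar i)
    -- the stress-test recursion
    (tτ tΛ : ℕ → Fin m → ℝ) (tΓ : ℕ → Fin n → Fin m → ℝ → ℝ)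
    (htΓ0 : ∀ i l t, tΓ 0 i l t = 0)
    (htτ0 : ∀ l, tτ 0 l = 0) (htτtop : ∀ l, tτ (n + 1) l = T)
    (htτmono : ∀ l, Monotone fun k => tτ k l)
    (htτmem : ∀ l, ∀ k ≤ n + 1, tτ k l ∈ Icc 0 T)
    (htτ : ∀ (k : Fin n) (l : Fin m), tτ ((k : ℕ) + 1) l =
      sInf {t | t ∈ Icc (tτ (k : ℕ) l) T ∧
        ft l t * fΓ l (∑ j ∈ Finset.univ.filter (fun j : Fin n => (j : ℕ) < (k : ℕ)),
          tΓ (k : ℕ) j l t) ≤ qbar k})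
    (htΛ : ∀ (k : Fin n) (l : Fin m), tΛ ((k : ℕ) + 1) l =
      1 + (1 - α l * θmin) / (α l * θmin) *
        (∑ j ∈ Finset.univ.filter (fun j : Fin n => (j : ℕ) ≤ (k : ℕ)),
          (s j l - tΓ (k : ℕ) j l (tτ ((k : ℕ) + 1) l))) *
        (deriv (fΓ l) (∑ j ∈ Finset.univ.filter (fun j : Fin n => (j : ℕ) < (k : ℕ)),
            tΓ (k : ℕ) j l (tτ ((k : ℕ) + 1) l)) /
          fΓ l (∑ j ∈ Finset.univ.filter (fun j : Fin n => (j : ℕ) < (k : ℕ)),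
            tΓ (k : ℕ) j l (tτ ((k : ℕ) + 1) l))))
    (htΓ : ∀ (k : Fin n) (i : Fin n) (l : Fin m) (t : ℝ),
      tΓ ((k : ℕ) + 1) i l t =
        if (i : ℕ) ≤ (k : ℕ) then
          (if t < tτ ((k : ℕ) + 1) l then tΓ (k : ℕ) i l t
          else s i l - (s i l - tΓ (k : ℕ) i l (tτ ((k : ℕ) + 1) l)) *
            (ft l t / ft l (tτ ((k : ℕ) + 1) l)) ^
              ((1 - α l * θmin) / (α l * θmin * tΛ ((k : ℕ) + 1) l)))
        else 0)
    -- asset `k₀` has an exponential inverse demand function with impact `b ≥ 0`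
    (k₀ : Fin m) (b : ℝ) (hb : 0 ≤ b)
    (hexp : ∀ γ, fΓ k₀ γ = Real.exp (-(b * γ))) :
    ∀ i : Fin n, tΛ ((i : ℕ) + 1) k₀ =
      1 - b * ((1 - α k₀ * θmin) / (α k₀ * θmin)) *
        ∑ j ∈ Finset.univ.filter (fun j : Fin n => j ≤ i),
          s j k₀ * ∏ h ∈ Finset.Icc ((j : ℕ) + 1) (i : ℕ),
            (ft k₀ (tτ (h + 1) k₀) / ft k₀ (tτ h k₀)) ^
              ((1 - α k₀ * θmin) / (α k₀ * θmin * tΛ h k₀)) := by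
  -- key recursion lemma
  have key : ∀ k : ℕ, k < n → ∀ j : Fin n, (j : ℕ) ≤ k →
      s j k₀ - tΓ k j k₀ (tτ (k + 1) k₀) =
      s j k₀ * ∏ h ∈ Finset.Icc ((j : ℕ) + 1) k,
        (ft k₀ (tτ (h + 1) k₀) / ft k₀ (tτ h k₀)) ^
          ((1 - α k₀ * θmin) / (α k₀ * θmin * tΛ h k₀)) := by
    intro k
    induction k with
    | zero =>
      intro hk j hj
      rw [htΓ0]
      simp
    | succ q ih =>
      intro hk j hj
      have hq : q < n := Nat.lt_of_succ_lt hk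
      have hkm : (⟨q, hq⟩ : Fin n) = (⟨q, hq⟩ : Fin n) := rfl
      have hΓ := htΓ ⟨q, hq⟩ j k₀ (tτ (q + 1 + 1) k₀)
      simp only [Fin.val_mk] at hΓ
      by_cases hjq : (j : ℕ) ≤ q
      · have hnotlt : ¬ tτ (q + 1 + 1) k₀ < tτ (q + 1) k₀ := by
          exact not_lt.2 (htτmono k₀ (Nat.le_succ _))
        rw [hΓ, if_pos hjq, if_neg hnotlt]
        have hIcc : (j : ℕ) + 1 ≤ q + 1 := Nat.succ_le_succ hjq
        rw [Finset.prod_Icc_succ_top hIcc, ← mul_assoc, ← ih hq j hjq]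
        ring
      · have hjq' : (j : ℕ) = q + 1 := le_antisymm hj (Nat.lt_of_not_le hjq)
        rw [hΓ, if_neg hjq, hjq']
        simp
  intro i
  -- the price-impact ratio is the constant `-b`
  have hfΓfun : fΓ k₀ = fun γ => Real.exp (-(b * γ)) := funext hexp
  have hderiv : ∀ γ : ℝ, deriv (fΓ k₀) γ / fΓ k₀ γ = -b := by
    intro γ
    have h1 : HasDerivAt (fun γ : ℝ => -(b * γ)) (-b) γ := by
      simpa using ((hasDerivAt_id γ).const_mul b).fun_neg
    have h2 : HasDerivAt (fΓ k₀) (Real.exp (-(b * γ)) * (-b)) γ := by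
      rw [hfΓfun]; exact h1.exp
    rw [h2.deriv, hexp]
    field_simp
  rw [htΛ i k₀, hderiv]
  have hsum : ∀ j ∈ Finset.univ.filter (fun j : Fin n => (j : ℕ) ≤ (i : ℕ)),
      s j k₀ - tΓ (i : ℕ) j k₀ (tτ ((i : ℕ) + 1) k₀) =
      s j k₀ * ∏ h ∈ Finset.Icc ((j : ℕ) + 1) (i : ℕ),
        (ft k₀ (tτ (h + 1) k₀) / ft k₀ (tτ h k₀)) ^
          ((1 - α k₀ * θmin) / (α k₀ * θmin * tΛ h k₀)) := by
    intro j hj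
    exact key (i : ℕ) i.2 j (by simpa using hj)
  rw [Finset.sum_congr rfl hsum]
  have hfilter : (Finset.univ.filter (fun j : Fin n => j ≤ i)) =
      (Finset.univ.filter (fun j : Fin n => (j : ℕ) ≤ (i : ℕ))) :=
    Finset.filter_congr (fun j _ => by rw [Fin.le_def])
  rw [hfilter]
  ring
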